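/- Let L h = ⟨h⟩_V·1 − h and Π_{V_-} h = (∫_0^1 h(v) dv)·1 on L²([-1,1]), and set L̃ = (I − Π_{V_-}) ∘ L ∘ (I − Π_{V_-}). Then for every λ > 0 the operator λ·I − L̃ is a bijection of L²([-1,1]) onto itself, with inverse given explicitly by k ↦ (1/(λ+1))( k + (1/λ)·⟨k⟩_{V_-}·1 ). -/

import Mathlib

open MeasureTheory Set

/-- for `λ > 0`, the operator `λI − L̃` with
`L̃ = (I − Π_{V_-}) L (I − Π_{V_-})` is a bijection of `L²([-1,1])` onto itself, with
explicit inverse `B : k ↦ (1/(λ+1))(k + (1/λ)⟨k⟩_{V_-}·1)`: the two compositions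
are the identity. -/
theorem stmt_11
    (lam : ℝ) (hlam : 0 < lam)
    -- the operator L̃ = (I − Π_{V_-}) ∘ L ∘ (I − Π_{V_-})
    (Lt : (ℝ → ℝ) → ℝ → ℝ)
    (hLt : ∀ h : ℝ → ℝ, ∀ v : ℝ,
      Lt h v =
        (fun Lk : ℝ → ℝ => Lk v - ∫ w in (0:ℝ)..1, Lk w)
          (fun w =>
            (1/2) * (∫ u in (-1:ℝ)..1, (h u - ∫ s in (0:ℝ)..1, h s))
              - (h w - ∫ s in (0:ℝ)..1, h s)))
    -- the claimed inverse of λI − L̃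
    (B : (ℝ → ℝ) → ℝ → ℝ)
    (hB : ∀ k : ℝ → ℝ, ∀ v : ℝ,
      B k v = (1/(lam+1)) * (k v + (1/lam) * ∫ w in (0:ℝ)..1, k w)) :
    ∀ h : ℝ → ℝ, MemLp h 2 (volume.restrict (Icc (-1:ℝ) 1)) →
      ∀ v ∈ Icc (-1:ℝ) 1,
        B (fun w => lam * h w - Lt h w) v = h v ∧
        lam * B h v - Lt (B h) v = h v := by
  intro h hh v hv
  have hlam0 : lam ≠ 0 := ne_of_gt hlam
  have hlam1 : lam + 1 ≠ 0 := by positivity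
  -- integrability of h on [0,1]
  have hInt : IntegrableOn h (Icc (-1:ℝ) 1) volume :=
    hh.integrable (by norm_num)
  have hI01 : IntervalIntegrable h volume 0 1 := by
    rw [intervalIntegrable_iff]
    apply hInt.mono_set
    rw [uIoc_of_le (by norm_num : (0:ℝ) ≤ 1)]
    intro x hx
    exact ⟨by linarith [hx.1], hx.2⟩
  -- key simplification of Lt
  have Ltval : ∀ g : ℝ → ℝ, IntervalIntegrable g volume 0 1 → ∀ x : ℝ,
      Lt g x = (∫ s in (0:ℝ)..1, g s) - g x := by
    intro g hg x
    have hint : (∫ w in (0:ℝ)..1,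
        ((1/2:ℝ) * (∫ u in (-1:ℝ)..1, (g u - ∫ s in (0:ℝ)..1, g s))
          - (g w - ∫ s in (0:ℝ)..1, g s)))
        = (1/2:ℝ) * (∫ u in (-1:ℝ)..1, (g u - ∫ s in (0:ℝ)..1, g s)) := by
      rw [intervalIntegral.integral_sub intervalIntegrable_const
            (hg.sub intervalIntegrable_const),
          intervalIntegral.integral_sub hg intervalIntegrable_const]
      simp
    rw [hLt]
    simp only
    rw [hint]
    ring
  set A := ∫ s in (0:ℝ)..1, h s with hA
  constructor
  · -- B ((λI - Lt) h) = h
    have hfun : (fun w => lam * h w - Lt h w) = fun w => (lam + 1) * h w - A := by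
      funext w
      rw [Ltval h hI01 w]
      ring
    rw [hfun, hB]
    have : (∫ w in (0:ℝ)..1, ((lam + 1) * h w - A))
        = (lam + 1) * A - A := by
      rw [intervalIntegral.integral_sub ((hI01.const_mul (lam+1)))
            intervalIntegrable_const,
          intervalIntegral.integral_const_mul]
      simp [hA]
    rw [this]
    field_simp
    ring
  · -- (λI - Lt) (B h) = h
    have hBh : B h = fun w => (1/(lam+1)) * (h w + (1/lam) * A) := funext (hB h)
    have hBint : IntervalIntegrable (B h) volume 0 1 := by
      rw [hBh]
      exact (hI01.add intervalIntegrable_const).const_mul _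
    rw [Ltval (B h) hBint v]
    have hintB : (∫ s in (0:ℝ)..1, B h s)
        = (1/(lam+1)) * (A + (1/lam) * A) := by
      rw [hBh]
      rw [intervalIntegral.integral_const_mul,
          intervalIntegral.integral_add hI01 intervalIntegrable_const]
      simp [hA]
    rw [hintB, hBh]
    simp only
    field_simp
    ring
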